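/- arXiv:2207.09113 — 2 statements merged into one kernel-verified Lean document; each statement's English description precedes it below -/
import Mathlib

section
/- The function v(x) = log( 8λ² / [λ² + (x¹+s₀)² + (x²+a+λ/√2)²]² ) satisfies the Neumann boundary condition ∂v/∂n = e^{v/2} on the boundary line {x² = -a}, where n = (0,-1) is the outward unit normal to the half-plane {x² > -a}. -/
/-- The bubble `v` satisfies the Neumann boundary condition `∂v/∂n = e^{v/2}` on `{x² = -a}`,
where the outward normal derivative at `(x¹, -a)` is `-∂v/∂x²(x¹, -a)`. -/
theorem stmt_1 (lam s₀ a : ℝ) (hlam : 0 < lam) (ha : 0 ≤ a)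
    (v : ℝ → ℝ → ℝ)
    (hv : ∀ x1 x2 : ℝ, v x1 x2 =
      Real.log (8 * lam ^ 2) -
        2 * Real.log (lam ^ 2 + (x1 + s₀) ^ 2 + (x2 + a + lam / Real.sqrt 2) ^ 2)) :
    ∀ x1 : ℝ, -(deriv (fun t => v x1 t) (-a)) = Real.exp (v x1 (-a) / 2) := by
  intro x1
  have hs2 : (0:ℝ) < Real.sqrt 2 := Real.sqrt_pos.2 (by norm_num)
  set c := lam / Real.sqrt 2 with hc
  set K := lam ^ 2 + (x1 + s₀) ^ 2 with hK
  have hcpos : 0 < c := div_pos hlam hs2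
  have hKpos : 0 < K := by positivity
  have hD : 0 < K + c ^ 2 := by positivity
  -- rewrite v as explicit function of second variable
  have hveq : (fun t => v x1 t) =
      fun t => Real.log (8 * lam ^ 2) - 2 * Real.log (K + (t + a + c) ^ 2) := by
    funext t; rw [hv]
  -- derivative
  have h1 : HasDerivAt (fun t : ℝ => K + (t + a + c) ^ 2) (2 * c) (-a) := by
    have h0 : HasDerivAt (fun t : ℝ => t + a + c) 1 (-a) :=
      ((hasDerivAt_id _).add_const a).add_const c
    have h2 := h0.pow 2
    have h3 := h2.const_add K
    convert h3 using 1
    · rfl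
    · rfl
    · simp
    · simp
  have hlog : HasDerivAt (fun t : ℝ => Real.log (K + (t + a + c) ^ 2))
      (2 * c / (K + (-a + a + c) ^ 2)) (-a) := by
    apply h1.log
    have : (-a + a + c : ℝ) = c := by ring
    rw [this]; exact hD.ne'
  have hderiv : HasDerivAt (fun t => v x1 t) (-(2 * (2 * c / (K + c ^ 2)))) (-a) := by
    rw [hveq]
    have := (hlog.const_mul 2).const_sub (Real.log (8 * lam ^ 2))
    convert this using 1
    · rfl
    · rfl
    have h : (-a + a + c : ℝ) = c := by ring
    rw [h]
  rw [hderiv.deriv]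
  -- compute RHS
  have hva : v x1 (-a) = Real.log (8 * lam ^ 2) - 2 * Real.log (K + c ^ 2) := by
    rw [hv]
    have h : (-a + a + c : ℝ) = c := by ring
    rw [h]
  rw [hva]
  have hA : (0:ℝ) < 8 * lam ^ 2 := by positivity
  have : (Real.log (8 * lam ^ 2) - 2 * Real.log (K + c ^ 2)) / 2
      = Real.log (Real.sqrt (8 * lam ^ 2)) - Real.log (K + c ^ 2) := by
    rw [Real.log_sqrt hA.le]; ring
  rw [this, Real.exp_sub, Real.exp_log (Real.sqrt_pos.2 hA), Real.exp_log hD]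
  have hsqrt : Real.sqrt (8 * lam ^ 2) = 4 * c := by
    have h8 : (8 * lam ^ 2 : ℝ) = (4 * c) ^ 2 := by
      rw [hc]; field_simp; norm_num
    rw [h8, Real.sqrt_sq (by positivity)]
  rw [hsqrt]
  field_simp
  ring
end

section
/- For the function v(x) = log(8λ²) - 2·log(λ² + (x¹+s₀)² + (x²+a+λ/√2)²), the total mass identity ∫_{ℝ²_a} e^{v} dx + ∫_{∂ℝ²_a} e^{v/2} ds = 4π holds, where ℝ²_a = {x² > -a}. -/
open MeasureTheory Real Set Filter Topology


section Stmt2Aux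

lemma st2_integrable_inv_quadratic (d : ℝ) (hd : 0 < d) :
    Integrable (fun t : ℝ => (d + t ^ 2)⁻¹) := by
  have hm : 0 < min d 1 := lt_min hd one_pos
  refine (integrable_inv_one_add_sq.const_mul (min d 1)⁻¹).mono' ?_ ?_
  · exact ((continuous_const.add (continuous_pow 2)).inv₀
      (fun t => (show (0:ℝ) < d + t ^ 2 by positivity).ne')).aestronglyMeasurable
  · refine ae_of_all _ fun t => ?_
    rw [Real.norm_eq_abs, abs_of_nonneg (by positivity), ← mul_inv]
    apply inv_anti₀ (by positivity)
    nlinarith [min_le_left d 1, min_le_right d 1, sq_nonneg t, hm.le]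

lemma st2_hasDerivAt_arctan_scaled (d : ℝ) (hd : 0 < d) (t : ℝ) :
    HasDerivAt (fun t : ℝ => (Real.sqrt d)⁻¹ * Real.arctan (t * (Real.sqrt d)⁻¹))
      ((d + t ^ 2)⁻¹) t := by
  have hs : 0 < Real.sqrt d := Real.sqrt_pos.2 hd
  have hd2 : Real.sqrt d ^ 2 = d := Real.sq_sqrt hd.le
  have h1 : HasDerivAt (fun t : ℝ => t * (Real.sqrt d)⁻¹) (1 * (Real.sqrt d)⁻¹) t :=
    (hasDerivAt_id t).mul_const _
  have h3 := ((Real.hasDerivAt_arctan (t * (Real.sqrt d)⁻¹)).comp t h1).const_mul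
    (Real.sqrt d)⁻¹
  refine HasDerivAt.congr_deriv h3 ?_
  symm
  have h4 : (1 : ℝ) + (t * (Real.sqrt d)⁻¹) ^ 2 = (d + t ^ 2) / d := by
    field_simp
    rw [hd2]; ring
  rw [h4]
  have hdt : 0 < d + t ^ 2 := by positivity
  field_simp
  exact hd2

lemma st2_integral_inv_quadratic (d : ℝ) (hd : 0 < d) :
    ∫ t : ℝ, (d + t ^ 2)⁻¹ = π / Real.sqrt d := by
  have hs : 0 < Real.sqrt d := Real.sqrt_pos.2 hd
  have harg_top : Tendsto (fun t : ℝ => t * (Real.sqrt d)⁻¹) atTop atTop :=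
    Tendsto.atTop_mul_const (inv_pos.2 hs) tendsto_id
  have harg_bot : Tendsto (fun t : ℝ => t * (Real.sqrt d)⁻¹) atBot atBot :=
    Tendsto.atBot_mul_const (inv_pos.2 hs) tendsto_id
  have htop : Tendsto (fun t : ℝ => (Real.sqrt d)⁻¹ * Real.arctan (t * (Real.sqrt d)⁻¹))
      atTop (𝓝 ((Real.sqrt d)⁻¹ * (π / 2))) :=
    (((tendsto_nhds_of_tendsto_nhdsWithin Real.tendsto_arctan_atTop).comp harg_top).const_mul _)
  have hbot : Tendsto (fun t : ℝ => (Real.sqrt d)⁻¹ * Real.arctan (t * (Real.sqrt d)⁻¹))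
      atBot (𝓝 ((Real.sqrt d)⁻¹ * (-(π / 2)))) :=
    (((tendsto_nhds_of_tendsto_nhdsWithin Real.tendsto_arctan_atBot).comp harg_bot).const_mul _)
  rw [MeasureTheory.integral_of_hasDerivAt_of_tendsto
    (fun t => st2_hasDerivAt_arctan_scaled d hd t) (st2_integrable_inv_quadratic d hd) hbot htop]
  field_simp
  ring

end Stmt2Aux


section B
variable (d : ℝ)

lemma st2_tendsto_part1_top (hd : 0 < d) :
    Tendsto (fun t : ℝ => t / (2 * d * (d + t ^ 2))) atTop (𝓝 0) := by
  apply squeeze_zero_norm' (a := fun t : ℝ => (2 * d * |t|)⁻¹)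
  · filter_upwards [eventually_gt_atTop 0] with t ht
    rw [Real.norm_eq_abs, abs_of_nonneg (by positivity), abs_of_pos ht, inv_eq_one_div,
      div_le_div_iff₀ (by positivity) (by positivity)]
    nlinarith [mul_pos hd hd]
  · apply Tendsto.inv_tendsto_atTop
    exact Tendsto.const_mul_atTop (by positivity) tendsto_abs_atTop_atTop

lemma st2_tendsto_part1_bot (hd : 0 < d) :
    Tendsto (fun t : ℝ => t / (2 * d * (d + t ^ 2))) atBot (𝓝 0) := by
  apply squeeze_zero_norm' (a := fun t : ℝ => (2 * d * |t|)⁻¹)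
  · filter_upwards [eventually_lt_atBot 0] with t ht
    have h0 : 0 < |t| := abs_pos.2 ht.ne
    rw [Real.norm_eq_abs, abs_div, abs_of_nonneg (show (0:ℝ) ≤ 2*d*(d+t^2) by positivity),
      inv_eq_one_div, div_le_div_iff₀ (by positivity) (mul_pos (by positivity) h0)]
    nlinarith [abs_mul_abs_self t, mul_pos hd hd]
  · apply Tendsto.inv_tendsto_atTop
    exact Tendsto.const_mul_atTop (by positivity)
      (tendsto_abs_atBot_atTop)

end B

section C
variable (d : ℝ)

lemma st2_integrable_inv_quadratic_sq (hd : 0 < d) :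
    Integrable (fun t : ℝ => ((d + t ^ 2) ^ 2)⁻¹) := by
  refine ((st2_integrable_inv_quadratic d hd).const_mul d⁻¹).mono' ?_ ?_
  · exact ((continuous_const.add (continuous_pow 2)).pow 2).inv₀
      (fun t => (show (0:ℝ) < (d + t ^ 2) ^ 2 by positivity).ne') |>.aestronglyMeasurable
  · refine ae_of_all _ fun t => ?_
    rw [Real.norm_eq_abs, abs_of_nonneg (by positivity), ← mul_inv]
    apply inv_anti₀ (by positivity)
    nlinarith [sq_nonneg t, hd.le]

noncomputable def st2F2 (d : ℝ) : ℝ → ℝ := fun t =>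
  t / (2 * d * (d + t ^ 2)) + (2 * d)⁻¹ * ((Real.sqrt d)⁻¹ * Real.arctan (t * (Real.sqrt d)⁻¹))

lemma st2_hasDerivAt_F2 (hd : 0 < d) (t : ℝ) :
    HasDerivAt (st2F2 d) (((d + t ^ 2) ^ 2)⁻¹) t := by
  have hdt : 0 < d + t ^ 2 := by positivity
  have hden : (2 * d * (d + t ^ 2)) ≠ 0 := by positivity
  have h1 : HasDerivAt (fun t : ℝ => 2 * d * (d + t ^ 2)) (2 * d * (2 * t ^ 1 * 1)) t :=
    (((hasDerivAt_id t).pow 2).const_add d).const_mul (2 * d)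
  have h2 : HasDerivAt (fun t : ℝ => t / (2 * d * (d + t ^ 2)))
      ((1 * (2 * d * (d + t ^ 2)) - t * (2 * d * (2 * t ^ 1 * 1))) / (2 * d * (d + t ^ 2)) ^ 2)
      t := (hasDerivAt_id t).div h1 hden
  have h3 := h2.add ((st2_hasDerivAt_arctan_scaled d hd t).const_mul (2 * d)⁻¹)
  refine HasDerivAt.congr_deriv h3 ?_
  symm
  field_simp
  ring

lemma st2_integral_inv_quadratic_sq (hd : 0 < d) :
    ∫ t : ℝ, ((d + t ^ 2) ^ 2)⁻¹ = π / (2 * d * Real.sqrt d) := by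
  have hs : 0 < Real.sqrt d := Real.sqrt_pos.2 hd
  have harg_top : Tendsto (fun t : ℝ => t * (Real.sqrt d)⁻¹) atTop atTop :=
    Tendsto.atTop_mul_const (inv_pos.2 hs) tendsto_id
  have harg_bot : Tendsto (fun t : ℝ => t * (Real.sqrt d)⁻¹) atBot atBot :=
    Tendsto.atBot_mul_const (inv_pos.2 hs) tendsto_id
  have htop : Tendsto (st2F2 d) atTop
      (𝓝 (0 + (2 * d)⁻¹ * ((Real.sqrt d)⁻¹ * (π / 2)))) :=
    (st2_tendsto_part1_top d hd).add
      ((((tendsto_nhds_of_tendsto_nhdsWithin Real.tendsto_arctan_atTop).comp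
        harg_top).const_mul (Real.sqrt d)⁻¹).const_mul (2 * d)⁻¹)
  have hbot : Tendsto (st2F2 d) atBot
      (𝓝 (0 + (2 * d)⁻¹ * ((Real.sqrt d)⁻¹ * (-(π / 2))))) :=
    (st2_tendsto_part1_bot d hd).add
      ((((tendsto_nhds_of_tendsto_nhdsWithin Real.tendsto_arctan_atBot).comp
        harg_bot).const_mul (Real.sqrt d)⁻¹).const_mul (2 * d)⁻¹)
  rw [MeasureTheory.integral_of_hasDerivAt_of_tendsto
    (fun t => st2_hasDerivAt_F2 d hd t) (st2_integrable_inv_quadratic_sq d hd) hbot htop]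
  field_simp
  ring

end C


lemma st2_tendsto_base (lam : ℝ) (hlam : 0 < lam) :
    Tendsto (fun w : ℝ => w / Real.sqrt (lam ^ 2 + w ^ 2)) atTop (𝓝 1) := by
  have h1 : Tendsto (fun w : ℝ => lam ^ 2 / w ^ 2 + 1) atTop (𝓝 (0 + 1)) := by
    have h0 : Tendsto (fun w : ℝ => w ^ 2) atTop atTop := tendsto_pow_atTop two_ne_zero
    have h1' : Tendsto (fun w : ℝ => lam ^ 2 * (w ^ 2)⁻¹) atTop (𝓝 (lam ^ 2 * 0)) :=
      h0.inv_tendsto_atTop.const_mul _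
    have h3 := h1'.add_const 1
    rw [mul_zero] at h3
    simpa [div_eq_mul_inv] using h3
  have h2 : Tendsto (fun z : ℝ => (Real.sqrt z)⁻¹) (𝓝 (0 + 1)) (𝓝 1) := by
    have hc : ContinuousAt (fun z : ℝ => (Real.sqrt z)⁻¹) 1 := by
      apply ContinuousAt.inv₀ Real.continuous_sqrt.continuousAt
      simp
    simpa using hc.tendsto
  apply (h2.comp h1).congr'
  filter_upwards [eventually_gt_atTop 0] with w hw
  have hsw : Real.sqrt (lam ^ 2 + w ^ 2) = w * Real.sqrt (lam ^ 2 / w ^ 2 + 1) := by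
    rw [← Real.sqrt_sq hw.le, ← Real.sqrt_mul (sq_nonneg w)]
    rw [Real.sqrt_sq hw.le]
    congr 1
    field_simp
  simp only [Function.comp]
  rw [hsw, div_mul_cancel_left₀ hw.ne']

lemma st2_integral_outer (lam c a : ℝ) (hlam : 0 < lam) (hc : 0 < c) :
    ∫ x in Ioi (-a),
        lam ^ 2 / ((lam ^ 2 + (x + a + c) ^ 2) * Real.sqrt (lam ^ 2 + (x + a + c) ^ 2))
      = 1 - c / Real.sqrt (lam ^ 2 + c ^ 2) := by
  have hderiv : ∀ x ∈ Ici (-a), HasDerivAt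
      (fun x : ℝ => (x + a + c) / Real.sqrt (lam ^ 2 + (x + a + c) ^ 2))
      (lam ^ 2 / ((lam ^ 2 + (x + a + c) ^ 2) * Real.sqrt (lam ^ 2 + (x + a + c) ^ 2))) x := by
    intro x _
    have hpos : 0 < lam ^ 2 + (x + a + c) ^ 2 := by positivity
    have hspos : 0 < Real.sqrt (lam ^ 2 + (x + a + c) ^ 2) := Real.sqrt_pos.2 hpos
    have hss : Real.sqrt (lam ^ 2 + (x + a + c) ^ 2) ^ 2 = lam ^ 2 + (x + a + c) ^ 2 :=
      Real.sq_sqrt hpos.le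
    have hw : HasDerivAt (fun x : ℝ => x + a + c) 1 x := by
      simpa using ((hasDerivAt_id x).add_const a).add_const c
    have hq : HasDerivAt (fun x : ℝ => lam ^ 2 + (x + a + c) ^ 2)
        (2 * (x + a + c) ^ 1 * 1) x := ((hw.pow 2).const_add (lam ^ 2))
    have hs : HasDerivAt (fun x : ℝ => Real.sqrt (lam ^ 2 + (x + a + c) ^ 2))
        (1 / (2 * Real.sqrt (lam ^ 2 + (x + a + c) ^ 2)) * (2 * (x + a + c) ^ 1 * 1)) x :=
      (Real.hasDerivAt_sqrt hpos.ne').comp x hq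
    have hdiv := hw.div hs hspos.ne'
    refine HasDerivAt.congr_deriv hdiv ?_
    symm
    set s := Real.sqrt (lam ^ 2 + (x + a + c) ^ 2) with hsdef
    rw [← hss]
    field_simp
    linear_combination (-1 : ℝ) * hss
  have hnonneg : ∀ x ∈ Ioi (-a),
      0 ≤ lam ^ 2 / ((lam ^ 2 + (x + a + c) ^ 2) * Real.sqrt (lam ^ 2 + (x + a + c) ^ 2)) :=
    fun x _ => by positivity
  have htend : Tendsto (fun x : ℝ => (x + a + c) / Real.sqrt (lam ^ 2 + (x + a + c) ^ 2))
      atTop (𝓝 1) := by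
    have hsh : Tendsto (fun x : ℝ => x + a + c) atTop atTop :=
      tendsto_atTop_add_const_right _ c (tendsto_atTop_add_const_right _ a tendsto_id)
    exact (st2_tendsto_base lam hlam).comp hsh
  have := integral_Ioi_of_hasDerivAt_of_nonneg' hderiv hnonneg htend
  rw [this]
  norm_num


-- translated versions
lemma st2_integrable_shift (d k : ℝ) (hd : 0 < d) :
    Integrable (fun t : ℝ => ((d + (t + k) ^ 2) ^ 2)⁻¹) := by
  have hmeas : AEStronglyMeasurable (fun t : ℝ => ((d + t ^ 2) ^ 2)⁻¹) volume :=
    (st2_integrable_inv_quadratic_sq d hd).aestronglyMeasurable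
  exact ((measurePreserving_add_right (volume : Measure ℝ) k).integrable_comp hmeas).2
    (st2_integrable_inv_quadratic_sq d hd)

lemma st2_integrable_shift1 (d k : ℝ) (hd : 0 < d) :
    Integrable (fun t : ℝ => (d + (t + k) ^ 2)⁻¹) := by
  have hmeas : AEStronglyMeasurable (fun t : ℝ => (d + t ^ 2)⁻¹) volume :=
    (st2_integrable_inv_quadratic d hd).aestronglyMeasurable
  exact ((measurePreserving_add_right (volume : Measure ℝ) k).integrable_comp hmeas).2
    (st2_integrable_inv_quadratic d hd)

lemma st2_integral_shift (d k : ℝ) (hd : 0 < d) :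
    ∫ t : ℝ, ((d + (t + k) ^ 2) ^ 2)⁻¹ = π / (2 * d * Real.sqrt d) := by
  rw [integral_add_right_eq_self (fun t : ℝ => ((d + t ^ 2) ^ 2)⁻¹) k]
  exact st2_integral_inv_quadratic_sq d hd

lemma st2_twoD (lam s₀ a c : ℝ) (hlam : 0 < lam) (hc : 0 < c) :
    (∫ p in {p : ℝ × ℝ | -a < p.2},
        8 * lam ^ 2 * (((lam ^ 2 + (p.2 + (a + c)) ^ 2) + (p.1 + s₀) ^ 2) ^ 2)⁻¹)
      = 4 * π - 4 * π * c / Real.sqrt (lam ^ 2 + c ^ 2) := by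
  set F : ℝ × ℝ → ℝ :=
    fun p => (((lam ^ 2 + (p.2 + (a + c)) ^ 2) + (p.1 + s₀) ^ 2) ^ 2)⁻¹ with hF
  have hFc : Continuous F := by
    apply Continuous.inv₀
    · fun_prop
    · intro p; positivity
  have hset : {p : ℝ × ℝ | -a < p.2} = (univ : Set ℝ) ×ˢ Ioi (-a) := by
    ext p; simp [Set.mem_prod]
  have hrestr : (volume : Measure (ℝ × ℝ)).restrict ((univ : Set ℝ) ×ˢ Ioi (-a))
      = (volume : Measure ℝ).prod ((volume : Measure ℝ).restrict (Ioi (-a))) := by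
    rw [MeasureTheory.Measure.volume_eq_prod, ← Measure.prod_restrict, Measure.restrict_univ]
  set ν := (volume : Measure ℝ).restrict (Ioi (-a)) with hν
  have hmeas : AEStronglyMeasurable F ((volume : Measure ℝ).prod ν) :=
    hFc.aestronglyMeasurable
  -- slice integrability in y for fixed x
  have hslice : ∀ x : ℝ, Integrable (fun y : ℝ => F (x, y)) ν := by
    intro x
    have h1 : Integrable (fun y : ℝ =>
        (((lam ^ 2 + (x + s₀) ^ 2) + (y + (a + c)) ^ 2) ^ 2)⁻¹) volume :=
      st2_integrable_shift _ (a + c) (by positivity)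
    have h2 : (fun y : ℝ => F (x, y)) =
        fun y : ℝ => (((lam ^ 2 + (x + s₀) ^ 2) + (y + (a + c)) ^ 2) ^ 2)⁻¹ := by
      funext y; rw [hF]; ring_nf
    rw [h2, hν]
    exact h1.restrict
  -- slice integrability in x for fixed y (whole line)
  have hsliceX : ∀ y : ℝ, Integrable (fun x : ℝ => F (x, y)) volume := by
    intro y
    have h1 : Integrable (fun x : ℝ =>
        (((lam ^ 2 + (y + (a + c)) ^ 2) + (x + s₀) ^ 2) ^ 2)⁻¹) volume :=
      st2_integrable_shift _ s₀ (by positivity)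
    exact h1
  have hFnonneg : ∀ p : ℝ × ℝ, 0 ≤ F p := fun p => by rw [hF]; positivity
  -- integrability on the product
  have hint : Integrable F ((volume : Measure ℝ).prod ν) := by
    rw [integrable_prod_iff hmeas]
    refine ⟨ae_of_all _ hslice, ?_⟩
    have hbound : ∀ x : ℝ, ‖∫ y, ‖F (x, y)‖ ∂ν‖ ≤
        π / (2 * lam) * ((lam ^ 2 + (x + s₀) ^ 2))⁻¹ := by
      intro x
      set d : ℝ := lam ^ 2 + (x + s₀) ^ 2 with hd
      have hdpos : 0 < d := by positivity
      have hnormF : (fun y : ℝ => ‖F (x, y)‖) = fun y => F (x, y) := by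
        funext y; rw [Real.norm_eq_abs, abs_of_nonneg (hFnonneg _)]
      rw [hnormF]
      have hI0 : 0 ≤ ∫ y, F (x, y) ∂ν :=
        integral_nonneg fun y => hFnonneg _
      rw [Real.norm_eq_abs, abs_of_nonneg hI0]
      have h2 : (fun y : ℝ => F (x, y)) =
          fun y : ℝ => ((d + (y + (a + c)) ^ 2) ^ 2)⁻¹ := by
        funext y; rw [hF, hd]; ring_nf
      rw [h2, hν]
      have hle : ∫ y in Ioi (-a), ((d + (y + (a + c)) ^ 2) ^ 2)⁻¹ ≤
          ∫ y : ℝ, ((d + (y + (a + c)) ^ 2) ^ 2)⁻¹ :=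
        setIntegral_le_integral (st2_integrable_shift d (a + c) hdpos)
          (ae_of_all _ fun y => by positivity)
      refine hle.trans ?_
      rw [st2_integral_shift d (a + c) hdpos]
      have hsd : lam ≤ Real.sqrt d := by
        rw [show lam = Real.sqrt (lam ^ 2) from (Real.sqrt_sq hlam.le).symm]
        exact Real.sqrt_le_sqrt (by nlinarith [sq_nonneg (x + s₀)])
      have heq : π / (2 * lam) * d⁻¹ = π / (2 * lam * d) := by
        field_simp
      rw [heq]
      apply div_le_div_of_nonneg_left Real.pi_pos.le (by positivity)
      nlinarith [hdpos, hlam]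
    have hgint : Integrable
        (fun x : ℝ => π / (2 * lam) * ((lam ^ 2 + (x + s₀) ^ 2))⁻¹) volume :=
      (st2_integrable_shift1 (lam ^ 2) s₀ (by positivity)).const_mul _
    exact Integrable.mono' hgint (hmeas.norm.integral_prod_right') (ae_of_all _ hbound)
  -- now compute
  rw [hset, MeasureTheory.integral_const_mul]
  rw [show ((volume : Measure (ℝ × ℝ))).restrict ((univ : Set ℝ) ×ˢ Ioi (-a)) =
    (volume : Measure ℝ).prod ν from hrestr]
  rw [MeasureTheory.integral_prod_symm F hint]
  have hinner : ∀ y : ℝ, (∫ x : ℝ, F (x, y)) =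
      (π / (2 * lam ^ 2)) * (lam ^ 2 /
        ((lam ^ 2 + (y + a + c) ^ 2) * Real.sqrt (lam ^ 2 + (y + a + c) ^ 2))) := by
    intro y
    have hD : 0 < lam ^ 2 + (y + (a + c)) ^ 2 := by positivity
    have h1 : (∫ x : ℝ, F (x, y)) =
        π / (2 * (lam ^ 2 + (y + (a + c)) ^ 2) * Real.sqrt (lam ^ 2 + (y + (a + c)) ^ 2)) :=
      st2_integral_shift _ s₀ hD
    rw [h1, show y + (a + c) = y + a + c by ring]
    have hs0 : Real.sqrt (lam ^ 2 + (y + a + c) ^ 2) ≠ 0 := by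
      refine (Real.sqrt_pos.2 ?_).ne'
      positivity
    field_simp
  rw [MeasureTheory.integral_congr_ae (ae_of_all _ hinner), hν,
    MeasureTheory.integral_const_mul, st2_integral_outer lam c a hlam hc]
  have hb : Real.sqrt (lam ^ 2 + c ^ 2) ≠ 0 := by
    refine (Real.sqrt_pos.2 ?_).ne'
    positivity
  field_simp
  ring


lemma st2_integral_shift1val (d k : ℝ) (hd : 0 < d) :
    ∫ t : ℝ, (d + (t + k) ^ 2)⁻¹ = π / Real.sqrt d := by
  rw [integral_add_right_eq_self (fun t : ℝ => (d + t ^ 2)⁻¹) k]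
  exact st2_integral_inv_quadratic d hd

/-- Total mass identity for the bubble: `∫_{ℝ²_a} e^v dx + ∫_{∂ℝ²_a} e^{v/2} ds = 4π`. -/
theorem stmt_2 (lam s₀ a : ℝ) (hlam : 0 < lam) (ha : 0 ≤ a)
    (v : ℝ → ℝ → ℝ)
    (hv : ∀ x1 x2 : ℝ, v x1 x2 =
      Real.log (8 * lam ^ 2) -
        2 * Real.log (lam ^ 2 + (x1 + s₀) ^ 2 + (x2 + a + lam / Real.sqrt 2) ^ 2)) :
    (∫ p in {p : ℝ × ℝ | -a < p.2}, Real.exp (v p.1 p.2)) +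
      (∫ x1 : ℝ, Real.exp (v x1 (-a) / 2)) = 4 * Real.pi := by
  have hsqrt2 : (0:ℝ) < Real.sqrt 2 := Real.sqrt_pos.2 (by norm_num)
  set c := lam / Real.sqrt 2 with hcdef
  have hc : 0 < c := div_pos hlam hsqrt2
  -- 2D part
  have h2d : (∫ p in {p : ℝ × ℝ | -a < p.2}, Real.exp (v p.1 p.2)) =
      ∫ p in {p : ℝ × ℝ | -a < p.2},
        8 * lam ^ 2 * (((lam ^ 2 + (p.2 + (a + c)) ^ 2) + (p.1 + s₀) ^ 2) ^ 2)⁻¹ := by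
    refine integral_congr_ae (ae_of_all _ fun p => ?_)
    show Real.exp (v p.1 p.2) = _
    rw [hv p.1 p.2]
    have hD : (0:ℝ) < lam ^ 2 + (p.1 + s₀) ^ 2 + (p.2 + a + c) ^ 2 := by positivity
    rw [show (2:ℝ) * Real.log (lam ^ 2 + (p.1 + s₀) ^ 2 + (p.2 + a + c) ^ 2)
        = Real.log ((lam ^ 2 + (p.1 + s₀) ^ 2 + (p.2 + a + c) ^ 2) ^ 2) by
      rw [Real.log_pow]; norm_num]
    rw [Real.exp_sub, Real.exp_log (by positivity), Real.exp_log (by positivity),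
      div_eq_mul_inv]
    congr 2
    ring
  -- boundary part
  have h1d : (∫ x1 : ℝ, Real.exp (v x1 (-a) / 2)) =
      Real.sqrt (8 * lam ^ 2) * (π / Real.sqrt (lam ^ 2 + c ^ 2)) := by
    have hb : (0:ℝ) < lam ^ 2 + c ^ 2 := by positivity
    have hpt : ∀ x1 : ℝ, Real.exp (v x1 (-a) / 2) =
        Real.sqrt (8 * lam ^ 2) * ((lam ^ 2 + c ^ 2) + (x1 + s₀) ^ 2)⁻¹ := by
      intro x1
      rw [hv x1 (-a)]
      have harg : -a + a + c = c := by ring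
      rw [harg]
      have hB : (0:ℝ) < lam ^ 2 + (x1 + s₀) ^ 2 + c ^ 2 := by positivity
      rw [sub_div, ← Real.log_sqrt (by positivity : (0:ℝ) ≤ 8 * lam ^ 2)]
      rw [show (2:ℝ) * Real.log (lam ^ 2 + (x1 + s₀) ^ 2 + c ^ 2) / 2
          = Real.log (lam ^ 2 + (x1 + s₀) ^ 2 + c ^ 2) by ring]
      rw [Real.exp_sub, Real.exp_log (Real.sqrt_pos.2 (by positivity)),
        Real.exp_log hB, div_eq_mul_inv]
      congr 2
      ring
    rw [integral_congr_ae (ae_of_all _ hpt), MeasureTheory.integral_const_mul,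
      st2_integral_shift1val _ s₀ hb]
  rw [h2d, h1d, st2_twoD lam s₀ a c hlam hc]
  have h2 : Real.sqrt 2 ^ 2 = 2 := Real.sq_sqrt (by norm_num)
  have h8 : Real.sqrt (8 * lam ^ 2) = 4 * c := by
    rw [show (8 * lam ^ 2 : ℝ) = (4 * c) ^ 2 by
      rw [hcdef, mul_pow, div_pow, h2]; ring]
    exact Real.sqrt_sq (by positivity)
  rw [h8]
  ring
end
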